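/- Let γ : S¹ → GL(n,ℂ) be an invertible matrix-valued loop with Fourier coefficients satisfying Σ_k |k|‖γ^{(k)}‖² < ∞. Then the operator I − T(γ)T(γ^{−1}) on ℓ²(ℕ, ℂⁿ) is trace class, where T(·) denotes the block Toeplitz operator. -/

import Mathlib

open scoped ENNReal

/-- The Hilbert space `ℓ²(ℕ, ℂⁿ)`. -/
noncomputable abbrev L2Seq (n : ℕ) := lp (fun _ : ℕ => EuclideanSpace ℂ (Fin n)) 2

/-- The standard orthonormal basis vector of `ℓ²(ℕ, ℂⁿ)` supported at block
`i`, coordinate `a`. -/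
noncomputable def stdVec (n : ℕ) (i : ℕ) (a : Fin n) : L2Seq n :=
  lp.single 2 i (EuclideanSpace.single a (1 : ℂ))

/-- An operator on `ℓ²(ℕ, ℂⁿ)` is Hilbert–Schmidt if the squared norms of the
images of the (standard) orthonormal basis vectors are summable. -/
def IsHilbertSchmidtOp (n : ℕ) (A : L2Seq n →L[ℂ] L2Seq n) : Prop :=
  Summable fun p : ℕ × Fin n => ‖A (stdVec n p.1 p.2)‖ ^ 2

namespace ToeplitzAux

set_option maxHeartbeats 2000000

lemma rpow_two_eq (x : ℝ) : x ^ ((2:ℝ≥0∞)).toReal = x ^ (2:ℕ) := by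
  rw [show ((2:ℝ≥0∞)).toReal = ((2:ℕ):ℝ) by norm_num, Real.rpow_natCast]

lemma euclid_norm_sq {n : ℕ} (v : EuclideanSpace ℂ (Fin n)) :
    ‖v‖^2 = ∑ a, ‖v a‖^2 := by
  rw [EuclideanSpace.norm_eq, Real.sq_sqrt]
  positivity

lemma lp_norm_sq {ι : Type*} {F : ι → Type*} [∀ i, NormedAddCommGroup (F i)]
    (f : lp F 2) : ‖f‖^2 = ∑' i, ‖f i‖^2 := by
  have := lp.norm_rpow_eq_tsum (p := 2) (by norm_num) f
  simpa [rpow_two_eq] using this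

lemma lp_summable_norm_sq {ι : Type*} {F : ι → Type*} [∀ i, NormedAddCommGroup (F i)]
    (f : lp F 2) : Summable fun i => ‖f i‖^2 := by
  have := (lp.memℓp f).summable (p := 2) (by norm_num)
  simpa [rpow_two_eq] using this

lemma summable_coord_sq {n : ℕ} (f : L2Seq n) :
    Summable (fun q : ℕ × Fin n => ‖f q.1 q.2‖^2) := by
  refine (summable_prod_of_nonneg (by intro q; positivity)).mpr ⟨fun i => ?_, ?_⟩
  · exact Summable.of_finite
  · apply (lp_summable_norm_sq f).congr
    intro i
    rw [euclid_norm_sq, tsum_fintype]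

lemma tsum_coord_sq {n : ℕ} (f : L2Seq n) :
    ∑' q : ℕ × Fin n, ‖f q.1 q.2‖^2 = ‖f‖^2 := by
  rw [lp_norm_sq, Summable.tsum_prod (summable_coord_sq f)]
  congr 1
  funext i
  rw [euclid_norm_sq, tsum_fintype]


lemma summable_mul_of_sq {ι : Type*} {a b : ι → ℂ}
    (ha : Summable fun q => ‖a q‖^2) (hb : Summable fun q => ‖b q‖^2) :
    Summable fun q => a q * b q := by
  refine Summable.of_norm (Summable.of_nonneg_of_le (fun q => norm_nonneg _)
    (fun q => ?_) ((ha.add hb).div_const 2))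
  rw [norm_mul]
  nlinarith [norm_nonneg (a q), norm_nonneg (b q), sq_nonneg (‖a q‖ - ‖b q‖)]

lemma norm_tsum_mul_sq_le {ι : Type*} {a b : ι → ℂ}
    (ha : Summable fun q => ‖a q‖^2) (hb : Summable fun q => ‖b q‖^2) :
    ‖∑' q, a q * b q‖^2 ≤ (∑' q, ‖a q‖^2) * (∑' q, ‖b q‖^2) := by
  have hamem : Memℓp (fun q => (starRingEnd ℂ) (a q)) (2 : ℝ≥0∞) := by
    apply memℓp_gen
    simpa [rpow_two_eq] using ha
  have hbmem : Memℓp b (2 : ℝ≥0∞) := by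
    apply memℓp_gen
    simpa [rpow_two_eq] using hb
  let u : lp (fun _ : ι => ℂ) 2 := ⟨fun q => (starRingEnd ℂ) (a q), hamem⟩
  let v : lp (fun _ : ι => ℂ) 2 := ⟨b, hbmem⟩
  have hinner : (inner ℂ u v : ℂ) = ∑' q, a q * b q := by
    rw [← (lp.hasSum_inner u v).tsum_eq]
    congr 1
    funext q
    simp [u, v, RCLike.inner_apply, mul_comm]
  have hcs : ‖(inner ℂ u v : ℂ)‖ ≤ ‖u‖ * ‖v‖ := norm_inner_le_norm u v
  have hu : ‖u‖^2 = ∑' q, ‖a q‖^2 := by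
    rw [lp_norm_sq]
    congr 1; funext q; simp [u]
  have hv : ‖v‖^2 = ∑' q, ‖b q‖^2 := by
    rw [lp_norm_sq]
  calc ‖∑' q, a q * b q‖^2 = ‖(inner ℂ u v : ℂ)‖^2 := by rw [hinner]
    _ ≤ (‖u‖ * ‖v‖)^2 := by
        apply pow_le_pow_left₀ (norm_nonneg _) hcs
    _ = ‖u‖^2 * ‖v‖^2 := by ring
    _ = _ := by rw [hu, hv]


section OpConstruction

variable {n : ℕ} (M : ℕ → ℕ → Matrix (Fin n) (Fin n) ℂ)

/-- squared entries, indexed by (row, column) pairs. -/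
noncomputable def entrySq (q : (ℕ × Fin n) × ℕ × Fin n) : ℝ := ‖M q.1.1 q.2.1 q.1.2 q.2.2‖ ^ 2

lemma entrySq_nonneg : 0 ≤ entrySq M := fun q => by
  simp only [entrySq]; positivity

/-- sum of squares of a row. -/
noncomputable def rowSum (i : ℕ) (a : Fin n) : ℝ := ∑' q : ℕ × Fin n, ‖M i q.1 a q.2‖^2

lemma row_summable (hM : Summable (entrySq M)) (i : ℕ) (a : Fin n) :
    Summable fun q : ℕ × Fin n => ‖M i q.1 a q.2‖^2 :=
  hM.comp_injective (i := fun q : ℕ × Fin n => (((i, a), q) : (ℕ × Fin n) × ℕ × Fin n))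
    (fun _ _ hpq => (Prod.ext_iff.1 hpq).2)

lemma rowSum_nonneg (i : ℕ) (a : Fin n) : 0 ≤ rowSum M i a :=
  tsum_nonneg (fun q => by positivity)

lemma rowSum_summable (hM : Summable (entrySq M)) : Summable fun p : ℕ × Fin n => rowSum M p.1 p.2 :=
  ((summable_prod_of_nonneg (entrySq_nonneg M)).mp hM).2

/-- total sum of squares. -/
noncomputable def totalSq : ℝ := ∑' p : ℕ × Fin n, rowSum M p.1 p.2

lemma totalSq_nonneg : 0 ≤ totalSq M := tsum_nonneg (fun p => rowSum_nonneg M p.1 p.2)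

/-- The underlying function of the operator attached to the matrix `M`. -/
noncomputable def applyF (x : L2Seq n) : ∀ _ : ℕ, EuclideanSpace ℂ (Fin n) :=
  fun i => WithLp.toLp 2 (fun a => ∑' q : ℕ × Fin n, M i q.1 a q.2 * x q.1 q.2)

lemma applyF_coord_sq_le (hM : Summable (entrySq M)) (x : L2Seq n) (i : ℕ) (a : Fin n) :
    ‖applyF M x i a‖^2 ≤ rowSum M i a * ‖x‖^2 := by
  have := norm_tsum_mul_sq_le (a := fun q : ℕ × Fin n => M i q.1 a q.2)
    (b := fun q : ℕ × Fin n => x q.1 q.2) (row_summable M hM i a) (summable_coord_sq x)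
  rwa [tsum_coord_sq] at this

lemma applyF_norm_sq_le (hM : Summable (entrySq M)) (x : L2Seq n) (i : ℕ) :
    ‖applyF M x i‖^2 ≤ (∑ a, rowSum M i a) * ‖x‖^2 := by
  rw [euclid_norm_sq, Finset.sum_mul]
  exact Finset.sum_le_sum (fun a _ => applyF_coord_sq_le M hM x i a)

lemma sum_rowSum_le (hM : Summable (entrySq M)) (s : Finset (ℕ × Fin n)) :
    ∑ p ∈ s, rowSum M p.1 p.2 ≤ totalSq M :=
  Summable.sum_le_tsum s (fun p _ => rowSum_nonneg M p.1 p.2) (rowSum_summable M hM)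

lemma memℓp_applyF (hM : Summable (entrySq M)) (x : L2Seq n) : Memℓp (applyF M x) 2 := by
  apply memℓp_gen' (C := totalSq M * ‖x‖^2)
  intro s
  have h1 : ∀ i ∈ s, ‖applyF M x i‖ ^ ((2:ℝ≥0∞)).toReal ≤ (∑ a, rowSum M i a) * ‖x‖^2 := by
    intro i _
    rw [rpow_two_eq]
    exact applyF_norm_sq_le M hM x i
  calc ∑ i ∈ s, ‖applyF M x i‖ ^ ((2:ℝ≥0∞)).toReal
      ≤ ∑ i ∈ s, (∑ a, rowSum M i a) * ‖x‖^2 := Finset.sum_le_sum h1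
    _ = (∑ p ∈ s ×ˢ (Finset.univ : Finset (Fin n)), rowSum M p.1 p.2) * ‖x‖^2 := by
        rw [Finset.sum_product]
        rw [← Finset.sum_mul]
    _ ≤ totalSq M * ‖x‖^2 := by
        apply mul_le_mul_of_nonneg_right (sum_rowSum_le M hM _) (by positivity)

/-- The operator attached to `M`, as a linear map. -/
noncomputable def opLinear (hM : Summable (entrySq M)) : L2Seq n →ₗ[ℂ] L2Seq n where
  toFun x := ⟨applyF M x, memℓp_applyF M hM x⟩
  map_add' x y := by
    apply lp.ext
    funext i
    ext a
    have hx := summable_mul_of_sq (a := fun q : ℕ × Fin n => M i q.1 a q.2)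
      (b := fun q : ℕ × Fin n => x q.1 q.2) (row_summable M hM i a) (summable_coord_sq x)
    have hy := summable_mul_of_sq (a := fun q : ℕ × Fin n => M i q.1 a q.2)
      (b := fun q : ℕ × Fin n => y q.1 q.2) (row_summable M hM i a) (summable_coord_sq y)
    show applyF M (x + y) i a = applyF M x i a + applyF M y i a
    rw [applyF, applyF, applyF, ← Summable.tsum_add hx hy]
    apply tsum_congr
    intro q
    rw [lp.coeFn_add, Pi.add_apply, PiLp.add_apply]
    ring
  map_smul' c x := by
    apply lp.ext
    funext i
    ext a
    show applyF M (c • x) i a = (c • (⟨applyF M x, memℓp_applyF M hM x⟩ : L2Seq n)) i a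
    rw [lp.coeFn_smul, Pi.smul_apply]
    show (∑' q : ℕ × Fin n, M i q.1 a q.2 * (c • x) q.1 q.2) = c • applyF M x i a
    have : ∀ q : ℕ × Fin n, M i q.1 a q.2 * (c • x) q.1 q.2
        = c * (M i q.1 a q.2 * x q.1 q.2) := by
      intro q
      rw [lp.coeFn_smul, Pi.smul_apply, PiLp.smul_apply, smul_eq_mul]
      ring
    rw [tsum_congr this, tsum_mul_left]
    rfl

lemma opLinear_bound (hM : Summable (entrySq M)) (x : L2Seq n) :
    ‖opLinear M hM x‖ ≤ Real.sqrt (totalSq M) * ‖x‖ := by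
  have hsum : Summable fun i => ‖applyF M x i‖^2 := by
    have := (memℓp_applyF M hM x).summable (p := 2) (by norm_num)
    simpa [rpow_two_eq] using this
  have hgroup : Summable fun i : ℕ => ∑ a, rowSum M i a := by
    have := ((summable_prod_of_nonneg
      (fun p : ℕ × Fin n => rowSum_nonneg M p.1 p.2)).mp (rowSum_summable M hM)).2
    apply this.congr
    intro i
    rw [tsum_fintype]
  have hmaj : Summable fun i : ℕ => (∑ a, rowSum M i a) * ‖x‖^2 := hgroup.mul_right _
  have h1 : ‖opLinear M hM x‖^2 ≤ totalSq M * ‖x‖^2 := by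
    have hco : ‖opLinear M hM x‖^2 = ∑' i, ‖applyF M x i‖^2 := lp_norm_sq _
    rw [hco]
    calc ∑' i, ‖applyF M x i‖^2 ≤ ∑' i, (∑ a, rowSum M i a) * ‖x‖^2 :=
          Summable.tsum_le_tsum (fun i => applyF_norm_sq_le M hM x i) hsum hmaj
      _ = (∑' i, ∑ a, rowSum M i a) * ‖x‖^2 := tsum_mul_right
      _ = totalSq M * ‖x‖^2 := by
          congr 1
          rw [totalSq, Summable.tsum_prod (rowSum_summable M hM)]
          exact tsum_congr fun i => (tsum_fintype _).symm
  have h2 : ‖opLinear M hM x‖ ≤ Real.sqrt (totalSq M * ‖x‖^2) := by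
    rw [← Real.sqrt_sq (norm_nonneg (opLinear M hM x))]
    exact Real.sqrt_le_sqrt h1
  rwa [Real.sqrt_mul (totalSq_nonneg M), Real.sqrt_sq (norm_nonneg x)] at h2

/-- The operator attached to a Hilbert–Schmidt matrix. -/
noncomputable def opOf (hM : Summable (entrySq M)) : L2Seq n →L[ℂ] L2Seq n :=
  LinearMap.mkContinuous (opLinear M hM) (Real.sqrt (totalSq M)) (opLinear_bound M hM)

lemma opOf_coord (hM : Summable (entrySq M)) (x : L2Seq n) (i : ℕ) (a : Fin n) :
    (opOf M hM x) i a = ∑' q : ℕ × Fin n, M i q.1 a q.2 * x q.1 q.2 := rfl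

end OpConstruction


section Coordinates

variable {n : ℕ}

lemma euclid_sum_apply {ι : Type*} (s : Finset ι) (f : ι → EuclideanSpace ℂ (Fin n))
    (c : Fin n) : (∑ i ∈ s, f i) c = ∑ i ∈ s, f i c := by
  classical
  induction s using Finset.induction_on with
  | empty => rfl
  | insert _ _ hnot ih =>
      rw [Finset.sum_insert hnot, Finset.sum_insert hnot, PiLp.add_apply, ih]

lemma stdVec_coord (j : ℕ) (b : Fin n) (k : ℕ) (c : Fin n) :
    (stdVec n j b) k c = if k = j ∧ c = b then 1 else 0 := by
  by_cases hk : k = j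
  · subst hk
    rw [stdVec, lp.single_apply_self, EuclideanSpace.single_apply]
    simp
  · rw [stdVec, lp.single_apply_ne _ _ _ hk]
    simp [hk]

lemma opOf_stdVec (M : ℕ → ℕ → Matrix (Fin n) (Fin n) ℂ) (hM : Summable (entrySq M))
    (j : ℕ) (b : Fin n) (i : ℕ) (a : Fin n) :
    (opOf M hM (stdVec n j b)) i a = M i j a b := by
  have hne : ∀ q : ℕ × Fin n, q ≠ ((j, b) : ℕ × Fin n) →
      M i q.1 a q.2 * (stdVec n j b) q.1 q.2 = 0 := by
    intro q hq
    rw [stdVec_coord, if_neg, mul_zero]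
    intro hh
    exact hq (Prod.ext hh.1 hh.2)
  rw [opOf_coord, tsum_eq_single ((j, b) : ℕ × Fin n) hne, stdVec_coord]
  simp

lemma opOf_isHS (M : ℕ → ℕ → Matrix (Fin n) (Fin n) ℂ) (hM : Summable (entrySq M)) :
    IsHilbertSchmidtOp n (opOf M hM) := by
  have hcolsummable : ∀ (j : ℕ) (b : Fin n),
      Summable fun q : ℕ × Fin n => ‖M q.1 j q.2 b‖^2 := by
    intro j b
    exact hM.comp_injective
      (i := fun q : ℕ × Fin n => ((q, (j, b)) : (ℕ × Fin n) × ℕ × Fin n))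
      (fun _ _ hpq => (Prod.ext_iff.1 hpq).1)
  have hcol : ∀ (j : ℕ) (b : Fin n),
      ‖opOf M hM (stdVec n j b)‖^2 = ∑' q : ℕ × Fin n, ‖M q.1 j q.2 b‖^2 := by
    intro j b
    rw [lp_norm_sq, Summable.tsum_prod (hcolsummable j b)]
    apply tsum_congr
    intro i
    rw [euclid_norm_sq, tsum_fintype]
    apply Finset.sum_congr rfl
    intro a _
    rw [opOf_stdVec M hM]
  have hswap : Summable fun r : (ℕ × Fin n) × ℕ × Fin n => entrySq M (r.2, r.1) :=
    (Equiv.prodComm (ℕ × Fin n) (ℕ × Fin n)).summable_iff.mpr hM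
  have h2 : Summable fun p : ℕ × Fin n => ∑' q : ℕ × Fin n, ‖M q.1 p.1 q.2 p.2‖^2 :=
    ((summable_prod_of_nonneg (fun r => by simp only [entrySq]; positivity)).mp hswap).2
  exact h2.congr (fun p => (hcol p.1 p.2).symm)

lemma inner_stdVec (i : ℕ) (a : Fin n) (y : L2Seq n) :
    (inner ℂ (stdVec n i a) y : ℂ) = y i a := by
  rw [stdVec, lp.inner_single_left, EuclideanSpace.inner_single_left]
  simp

lemma single_eq_sum (k : ℕ) (v : EuclideanSpace ℂ (Fin n)) :
    lp.single 2 k v = ∑ c, v c • stdVec n k c := by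
  apply lp.ext
  funext m
  rw [lp.coeFn_sum, Finset.sum_apply]
  ext c'
  rw [euclid_sum_apply]
  have hco : ∀ c, ((v c • stdVec n k c : L2Seq n) : ∀ _, EuclideanSpace ℂ (Fin n)) m c'
      = if m = k ∧ c' = c then v c else 0 := by
    intro c
    rw [lp.coeFn_smul, Pi.smul_apply, PiLp.smul_apply, stdVec_coord, smul_eq_mul]
    by_cases h : m = k ∧ c' = c <;> simp [h]
  rw [Finset.sum_congr rfl (fun c _ => hco c)]
  by_cases hm : m = k
  · subst hm
    rw [lp.single_apply_self]
    simp
  · rw [lp.single_apply_ne _ _ _ hm]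
    simp [hm]

lemma coord_hasSum (T : L2Seq n →L[ℂ] L2Seq n) (y : L2Seq n) (i : ℕ) (a : Fin n) :
    HasSum (fun k : ℕ => ∑ c, y k c * (T (stdVec n k c)) i a) ((T y) i a) := by
  have h0 : HasSum (fun k : ℕ => lp.single 2 k (y k)) y :=
    lp.hasSum_single (by norm_num) y
  have h1 := h0.mapL ((innerSL ℂ (stdVec n i a)).comp T)
  have h2 : ((innerSL ℂ (stdVec n i a)).comp T) y = (T y) i a := by
    simp only [ContinuousLinearMap.comp_apply, innerSL_apply_apply]
    exact inner_stdVec i a (T y)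
  rw [h2] at h1
  refine h1.congr_fun fun k => ?_
  rw [single_eq_sum]
  simp only [ContinuousLinearMap.comp_apply, innerSL_apply_apply, map_sum, map_smul, inner_sum,
    inner_smul_right]
  apply Finset.sum_congr rfl
  intro c _
  rw [inner_stdVec, smul_eq_mul]

lemma ext_of_stdVec (T₁ T₂ : L2Seq n →L[ℂ] L2Seq n)
    (hst : ∀ (k : ℕ) (c : Fin n), T₁ (stdVec n k c) = T₂ (stdVec n k c)) : T₁ = T₂ := by
  refine ContinuousLinearMap.ext fun x => ?_
  have h0 : HasSum (fun k : ℕ => lp.single 2 k (x k)) x := lp.hasSum_single (by norm_num) x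
  have h1 := h0.mapL T₁
  have h2 := h0.mapL T₂
  refine h1.unique (h2.congr_fun fun k => ?_)
  rw [single_eq_sum, map_sum, map_sum]
  exact Finset.sum_congr rfl fun c _ => by rw [map_smul, map_smul, hst]

end Coordinates


section Besov

variable {n : ℕ}

lemma summable_hankel_aux (φ : ℤ → ℝ) (hpos : ∀ k, 0 ≤ φ k)
    (hsum : Summable fun k : ℤ => (|k| : ℝ) * φ k)
    (ι : ℕ → ℤ) (hinj : Function.Injective ι) (hval : ∀ m : ℕ, |ι m| = (m : ℤ) + 1) :
    Summable fun p : ℕ × ℕ => φ (ι (p.1 + p.2)) := by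
  rw [← Finset.HasAntidiagonal.sigmaAntidiagonalEquivProd.summable_iff]
  refine (summable_sigma_of_nonneg (fun x => hpos _)).mpr ⟨fun m => Summable.of_finite, ?_⟩
  have hfib : ∀ m : ℕ, (∑' y : (Finset.HasAntidiagonal.antidiagonal m : Finset (ℕ × ℕ)),
      φ (ι ((y : ℕ × ℕ).1 + (y : ℕ × ℕ).2))) = ((m : ℝ) + 1) * φ (ι m) := by
    intro m
    rw [tsum_fintype]
    have : ∀ y : (Finset.HasAntidiagonal.antidiagonal m : Finset (ℕ × ℕ)),
        φ (ι ((y : ℕ × ℕ).1 + (y : ℕ × ℕ).2)) = φ (ι m) := by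
      rintro ⟨y, hy⟩
      rw [Finset.HasAntidiagonal.mem_antidiagonal] at hy
      rw [hy]
    rw [Finset.sum_congr rfl (fun y _ => this y), Finset.sum_const, Finset.card_univ,
      Fintype.card_coe, Finset.Nat.card_antidiagonal, nsmul_eq_mul]
    push_cast
    ring
  have hmain : Summable fun m : ℕ => ((m : ℝ) + 1) * φ (ι m) := by
    have h1 := hsum.comp_injective hinj
    apply h1.congr
    intro m
    show |((ι m : ℤ) : ℝ)| * φ (ι m) = _
    have habs : |((ι m : ℤ) : ℝ)| = (m : ℝ) + 1 := by
      rw [← Int.cast_abs, hval m]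
      push_cast
      ring
    rw [habs]
  exact hmain.congr (fun m => (hfib m).symm)

/-- regrouping equivalence. -/
def regroup (n : ℕ) : (Fin n × Fin n) × (ℕ × ℕ) ≃ (ℕ × Fin n) × (ℕ × Fin n) where
  toFun x := ((x.2.1, x.1.1), (x.2.2, x.1.2))
  invFun y := ((y.1.2, y.2.2), (y.1.1, y.2.1))
  left_inv _ := rfl
  right_inv _ := rfl

lemma entrySq_summable_of_besov (g : ℤ → Matrix (Fin n) (Fin n) ℂ)
    (hB : ∀ a b : Fin n, Summable fun k : ℤ => (|k| : ℝ) * ‖g k a b‖ ^ 2)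
    (ι : ℕ → ℤ) (hinj : Function.Injective ι) (hval : ∀ m : ℕ, |ι m| = (m : ℤ) + 1) :
    Summable (entrySq (fun i k : ℕ => g (ι (i + k)))) := by
  rw [← (regroup n).summable_iff]
  refine (summable_prod_of_nonneg ?_).mpr ⟨?_, ?_⟩
  · intro x
    simp only [Function.comp_apply, regroup, entrySq]
    positivity
  · intro ab
    exact summable_hankel_aux (fun k => ‖g k ab.1 ab.2‖ ^ 2) (fun k => by positivity)
      (hB ab.1 ab.2) ι hinj hval
  · exact Summable.of_finite

end Besov

end ToeplitzAux

open ToeplitzAux in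
/-- let `γ : S¹ → GL(n,ℂ)` be an invertible matrix loop whose
Fourier coefficients `g` (and those `h` of `γ⁻¹`) satisfy the Besov condition
`Σ_k |k|‖γ^{(k)}‖² < ∞`.  Then `I − T(γ)T(γ⁻¹)` is trace class: it is the
product of two Hilbert–Schmidt operators.  Here `T(γ)`, `T(γ⁻¹)` are the
block Toeplitz operators on `ℓ²(ℕ,ℂⁿ)` with `(i,j)`-blocks `γ^{(i−j)}`,
`(γ⁻¹)^{(i−j)}`. -/
theorem one_sub_toeplitz_product_traceClass (n : ℕ)
    (g h : ℤ → Matrix (Fin n) (Fin n) ℂ)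
    (hBesovG : ∀ a b : Fin n, Summable fun k : ℤ => (|k| : ℝ) * ‖g k a b‖ ^ 2)
    (hBesovH : ∀ a b : Fin n, Summable fun k : ℤ => (|k| : ℝ) * ‖h k a b‖ ^ 2)
    (hconv : ∀ m : ℤ,
      HasSum (fun k : ℤ => g (m - k) * h k)
        (if m = 0 then (1 : Matrix (Fin n) (Fin n) ℂ) else 0))
    (Tg Th : L2Seq n →L[ℂ] L2Seq n)
    (hTg : ∀ (i j : ℕ) (a b : Fin n),
      (inner ℂ (stdVec n i a) (Tg (stdVec n j b)) : ℂ) = g ((i : ℤ) - j) a b)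
    (hTh : ∀ (i j : ℕ) (a b : Fin n),
      (inner ℂ (stdVec n i a) (Th (stdVec n j b)) : ℂ) = h ((i : ℤ) - j) a b) :
    ∃ A B : L2Seq n →L[ℂ] L2Seq n,
      IsHilbertSchmidtOp n A ∧ IsHilbertSchmidtOp n B ∧
        (1 : L2Seq n →L[ℂ] L2Seq n) - Tg.comp Th = A.comp B := by
  classical
  -- index embeddings
  have hinjg : Function.Injective (fun m : ℕ => (m : ℤ) + 1) := by
    intro x y hxy
    simpa using hxy
  have hvalg : ∀ m : ℕ, |(fun m : ℕ => (m : ℤ) + 1) m| = (m : ℤ) + 1 := by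
    intro m
    rw [abs_of_nonneg (by positivity)]
  have hinjh : Function.Injective (fun m : ℕ => -((m : ℤ) + 1)) := by
    intro x y hxy
    simp only [neg_inj] at hxy
    simpa using hxy
  have hvalh : ∀ m : ℕ, |(fun m : ℕ => -((m : ℤ) + 1)) m| = (m : ℤ) + 1 := by
    intro m
    rw [abs_neg, abs_of_nonneg (by positivity)]
  set GM : ℕ → ℕ → Matrix (Fin n) (Fin n) ℂ := fun i k => g (((i + k : ℕ) : ℤ) + 1) with hGMdef
  set HM : ℕ → ℕ → Matrix (Fin n) (Fin n) ℂ := fun k j => h (-(((k + j : ℕ) : ℤ) + 1)) with hHMdef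
  have hMG : Summable (entrySq GM) :=
    entrySq_summable_of_besov g hBesovG (fun m : ℕ => (m : ℤ) + 1) hinjg hvalg
  have hMH : Summable (entrySq HM) :=
    entrySq_summable_of_besov h hBesovH (fun m : ℕ => -((m : ℤ) + 1)) hinjh hvalh
  refine ⟨opOf GM hMG, opOf HM hMH, opOf_isHS GM hMG, opOf_isHS HM hMH, ?_⟩
  apply ext_of_stdVec
  intro j b
  apply lp.ext
  funext i
  ext a
  -- coordinate descriptions
  have hThc : ∀ (k : ℕ) (c : Fin n), (Th (stdVec n j b)) k c = h ((k : ℤ) - j) c b := by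
    intro k c
    rw [← inner_stdVec]
    exact hTh k j c b
  have hTgc : ∀ (k : ℕ) (c : Fin n), (Tg (stdVec n k c)) i a = g ((i : ℤ) - k) a c := by
    intro k c
    rw [← inner_stdVec]
    exact hTg i k a c
  set F : ℤ → ℂ := fun m => (g ((i : ℤ) - m) * h (m - j)) a b with hFdef
  -- the Toeplitz part
  have hs1 : HasSum (fun k : ℕ => F (k : ℤ)) ((Tg (Th (stdVec n j b))) i a) := by
    refine (coord_hasSum Tg (Th (stdVec n j b)) i a).congr_fun fun k => ?_
    rw [hFdef]
    simp only [Matrix.mul_apply]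
    refine Finset.sum_congr rfl fun c _ => ?_
    rw [hThc k c, hTgc k c]
    ring
  -- the Hankel part
  have hs2 : HasSum (fun k : ℕ => F (-((k : ℤ) + 1)))
      ((opOf GM hMG ((opOf HM hMH) (stdVec n j b))) i a) := by
    refine (coord_hasSum (opOf GM hMG) ((opOf HM hMH) (stdVec n j b)) i a).congr_fun
      fun k => ?_
    rw [hFdef]
    simp only [Matrix.mul_apply]
    have e1 : (i : ℤ) - (-((k : ℤ) + 1)) = ((i + k : ℕ) : ℤ) + 1 := by push_cast; ring
    have e2 : (-((k : ℤ) + 1)) - (j : ℤ) = -(((k + j : ℕ) : ℤ) + 1) := by push_cast; ring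
    rw [e1, e2]
    refine Finset.sum_congr rfl fun c _ => ?_
    rw [opOf_stdVec HM hMH j b k c, opOf_stdVec GM hMG k c i a]
    ring
  -- the convolution identity, entrywise and reindexed
  have h0 := hconv ((i : ℤ) - j)
  have h1 : HasSum (fun k : ℤ => (g ((i : ℤ) - j - k) * h k) a b)
      ((if ((i : ℤ) - j) = 0 then (1 : Matrix (Fin n) (Fin n) ℂ) else 0) a b) := by
    exact Pi.hasSum.mp (Pi.hasSum.mp h0 a) b
  have hδ : ((if ((i : ℤ) - j) = 0 then (1 : Matrix (Fin n) (Fin n) ℂ) else 0) a b)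
      = (if i = j ∧ a = b then (1 : ℂ) else 0) := by
    by_cases hij : (i : ℤ) - j = 0
    · have : i = j := by
        have := sub_eq_zero.mp hij
        exact_mod_cast this
      rw [if_pos hij, Matrix.one_apply]
      simp [this]
    · have : ¬ i = j := by
        intro hh
        exact hij (by rw [hh, sub_self])
      rw [if_neg hij]
      simp [this]
  have hsZ : HasSum F (if i = j ∧ a = b then (1 : ℂ) else 0) := by
    rw [← hδ]
    refine ((Equiv.subRight (j : ℤ)).hasSum_iff.mpr h1).congr_fun fun m => ?_
    show F m = (g ((i : ℤ) - j - ((m : ℤ) - j)) * h (m - j)) a b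
    rw [hFdef]
    ring_nf
  -- combine
  have hcomb := hs1.of_nat_of_neg_add_one hs2
  have hkey := hcomb.unique hsZ
  -- conclude, coordinatewise
  show (((1 : L2Seq n →L[ℂ] L2Seq n) - Tg.comp Th) (stdVec n j b)) i a
      = (((opOf GM hMG).comp (opOf HM hMH)) (stdVec n j b)) i a
  rw [ContinuousLinearMap.sub_apply, ContinuousLinearMap.one_apply,
    ContinuousLinearMap.comp_apply, ContinuousLinearMap.comp_apply,
    lp.coeFn_sub, Pi.sub_apply, PiLp.sub_apply, stdVec_coord]
  linear_combination -hkey
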